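/- Let (λ_n)_{n≥1} be a sequence with λ_n ∈ (0,1) for n ≥ 2, (a_n), (b_n) sequences of nonnegative reals with a_{n+1} ≤ (1 − λ_{n+1})·a_n + b_n for all n ≥ 1, a_n ≤ M for all n with M ∈ ℤ₊, γ a Cauchy modulus of s_n = ∑_{i=1}^n b_i, θ a rate of convergence towards 0 of ∏_{n=1}^∞ (1 − λ_{n+1}), and 0 < D ≤ ∏_{n=1}^{γ(ε/2)}(1 − λ_{n+1}). Then for all ε ∈ (0,2) and all n ≥ θ(Dε/(2M)) + 1, we have a_n ≤ ε. -/

import Mathlib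

theorem stmt5 (lam a b : ℕ → ℝ) (M : ℕ) (hM : 0 < M) (γ θ : ℝ → ℕ)
    (hlam : ∀ n, 2 ≤ n → lam n ∈ Set.Ioo (0:ℝ) 1)
    (ha0 : ∀ n, 1 ≤ n → 0 ≤ a n) (hb0 : ∀ n, 1 ≤ n → 0 ≤ b n)
    (haM : ∀ n, 1 ≤ n → a n ≤ M)
    (hrec : ∀ n, 1 ≤ n → a (n+1) ≤ (1 - lam (n+1)) * a n + b n)
    (hγ : ∀ δ : ℝ, 0 < δ → ∀ n : ℕ,
      (∑ i ∈ Finset.Icc 1 (γ δ + n), b i) - (∑ i ∈ Finset.Icc 1 (γ δ), b i) ≤ δ)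
    (hθ : ∀ δ : ℝ, 0 < δ → ∀ n : ℕ, θ δ ≤ n → ∏ j ∈ Finset.Icc 1 n, (1 - lam (j+1)) ≤ δ) :
    ∀ ε : ℝ, ε ∈ Set.Ioo (0:ℝ) 2 → ∀ D : ℝ, 0 < D →
      D ≤ ∏ n ∈ Finset.Icc 1 (γ (ε/2)), (1 - lam (n+1)) →
      ∀ n, θ (D * ε / (2 * M)) + 1 ≤ n → a n ≤ ε := by
  intro ε hε D hD hDle n hn
  obtain ⟨hε0, hε2⟩ := hε
  set N := γ (ε/2) with hNdef
  have hMpos : (0:ℝ) < M := by exact_mod_cast hM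
  have hM1 : (1:ℝ) ≤ M := by exact_mod_cast hM
  have hfac : ∀ j : ℕ, 1 ≤ j → 0 < 1 - lam (j+1) ∧ 1 - lam (j+1) < 1 := by
    intro j hj
    have h := hlam (j+1) (by omega)
    exact ⟨by linarith [h.2], by linarith [h.1]⟩
  have hδ : 0 < D * ε / (2 * M) := by positivity
  have hprodpos : ∀ m : ℕ, 0 < ∏ j ∈ Finset.Icc 1 m, (1 - lam (j+1)) :=
    fun m => Finset.prod_pos (fun j hj => (hfac j (Finset.mem_Icc.mp hj).1).1)
  have hNθ : N < θ (D * ε / (2 * M)) := by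
    by_contra h
    push_neg at h
    have h1 := hθ _ hδ N h
    have h2 : D * ε / (2*M) < D := by
      rw [div_lt_iff₀ (by positivity)]
      nlinarith
    linarith [hDle, h1]
  have hnN : N + 2 ≤ n := by omega
  -- induction claim
  have key : ∀ k, a (N+1+k) ≤ (∏ j ∈ Finset.Icc (N+1) (N+k), (1 - lam (j+1))) * a (N+1)
      + ∑ i ∈ Finset.Icc (N+1) (N+k), b i := by
    intro k
    induction k with
    | zero =>
      simp [Finset.Icc_eq_empty_of_lt (Nat.lt_succ_self N)]
    | succ k ih =>
      have h1 : 1 ≤ N+1+k := by omega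
      have hrec' := hrec (N+1+k) h1
      rw [show N+(k+1) = (N+k)+1 by ring,
        Finset.prod_Icc_succ_top (by omega) (fun j => (1 - lam (j+1))),
        Finset.sum_Icc_succ_top (by omega)]
      have hP : 0 < ∏ j ∈ Finset.Icc (N+1) (N+k), (1 - lam (j+1)) :=
        Finset.prod_pos (fun j hj => (hfac j (by have := (Finset.mem_Icc.mp hj).1; omega)).1)
      have hS : 0 ≤ ∑ i ∈ Finset.Icc (N+1) (N+k), b i :=
        Finset.sum_nonneg (fun i hi => hb0 i (by have := (Finset.mem_Icc.mp hi).1; omega))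
      have haN1 : 0 ≤ a (N+1) := ha0 (N+1) (by omega)
      have hlm := hfac (N+1+k) (by omega)
      have heq : N+1+k+1 = N+k+1+1 := by ring
      rw [heq] at hrec'
      have hmul := mul_le_mul_of_nonneg_left ih (le_of_lt (by rw [show N+1+k = N+k+1 by ring] at hlm; exact hlm.1))
      rw [show N+1+(k+1) = N+k+1+1 by ring]
      have hb' : a (N+k+1+1) ≤ (1 - lam (N+k+1+1)) * a (N+1+k) + b (N+1+k) := hrec'
      rw [show N+1+k = N+k+1 by ring] at hb' hmul ih
      rw [show N+1+k = N+k+1 by ring] at hlm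
      nlinarith [hlm.1, hlm.2, mul_nonneg (le_of_lt hlm.1) hS]
  -- apply with k = n - (N+1)
  have hkey := key (n - (N+1))
  have hrw1 : N + 1 + (n - (N+1)) = n := by omega
  have hrw2 : N + (n - (N+1)) = n - 1 := by omega
  rw [hrw1, hrw2] at hkey
  -- bound the product
  have hsplit : (∏ j ∈ Finset.Icc 1 N, (1 - lam (j+1))) * (∏ j ∈ Finset.Icc (N+1) (n-1), (1 - lam (j+1)))
      = ∏ j ∈ Finset.Icc 1 (n-1), (1 - lam (j+1)) := by
    have e1 : Finset.Icc 1 N = Finset.Ioc 0 N := Finset.Icc_add_one_left_eq_Ioc 0 N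
    have e2 : Finset.Icc (N+1) (n-1) = Finset.Ioc N (n-1) := Finset.Icc_add_one_left_eq_Ioc N (n-1)
    have e3 : Finset.Icc 1 (n-1) = Finset.Ioc 0 (n-1) := Finset.Icc_add_one_left_eq_Ioc 0 (n-1)
    rw [e1, e2, e3]
    exact Finset.prod_Ioc_consecutive _ (by omega) (by omega)
  have hθn : ∏ j ∈ Finset.Icc 1 (n-1), (1 - lam (j+1)) ≤ D * ε / (2 * M) :=
    hθ _ hδ (n-1) (by omega)
  have hP2 : 0 < ∏ j ∈ Finset.Icc (N+1) (n-1), (1 - lam (j+1)) :=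
    Finset.prod_pos (fun j hj => (hfac j (by have := (Finset.mem_Icc.mp hj).1; omega)).1)
  have hprodN : 0 < ∏ j ∈ Finset.Icc 1 N, (1 - lam (j+1)) := hprodpos N
  have hPbound : ∏ j ∈ Finset.Icc (N+1) (n-1), (1 - lam (j+1)) ≤ ε / (2 * M) := by
    have h1 : D * (∏ j ∈ Finset.Icc (N+1) (n-1), (1 - lam (j+1))) ≤ D * ε / (2 * M) := by
      calc D * (∏ j ∈ Finset.Icc (N+1) (n-1), (1 - lam (j+1)))
          ≤ (∏ j ∈ Finset.Icc 1 N, (1 - lam (j+1))) * (∏ j ∈ Finset.Icc (N+1) (n-1), (1 - lam (j+1))) :=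
            mul_le_mul_of_nonneg_right hDle (le_of_lt hP2)
        _ = ∏ j ∈ Finset.Icc 1 (n-1), (1 - lam (j+1)) := hsplit
        _ ≤ D * ε / (2 * M) := hθn
    have h2 : D * ((∏ j ∈ Finset.Icc (N+1) (n-1), (1 - lam (j+1))) * (2*M)) ≤ D * ε := by
      rw [le_div_iff₀ (by positivity)] at h1; linarith
    have h3 := le_of_mul_le_mul_left h2 hD
    rw [le_div_iff₀ (by positivity)]; linarith
  -- bound the sum
  have hsumsplit : (∑ i ∈ Finset.Icc 1 N, b i) + (∑ i ∈ Finset.Icc (N+1) (n-1), b i)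
      = ∑ i ∈ Finset.Icc 1 (n-1), b i := by
    have e1 : Finset.Icc 1 N = Finset.Ioc 0 N := Finset.Icc_add_one_left_eq_Ioc 0 N
    have e2 : Finset.Icc (N+1) (n-1) = Finset.Ioc N (n-1) := Finset.Icc_add_one_left_eq_Ioc N (n-1)
    have e3 : Finset.Icc 1 (n-1) = Finset.Ioc 0 (n-1) := Finset.Icc_add_one_left_eq_Ioc 0 (n-1)
    rw [e1, e2, e3]
    exact Finset.sum_Ioc_consecutive _ (by omega) (by omega)
  have hε2pos : 0 < ε / 2 := by linarith
  have hγ' := hγ (ε/2) hε2pos (n - 1 - N)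
  rw [show N + (n - 1 - N) = n - 1 by omega] at hγ'
  have hSbound : ∑ i ∈ Finset.Icc (N+1) (n-1), b i ≤ ε / 2 := by linarith
  -- finish
  have haN1M : a (N+1) ≤ M := haM (N+1) (by omega)
  have haN1 : 0 ≤ a (N+1) := ha0 (N+1) (by omega)
  have hPa : (∏ j ∈ Finset.Icc (N+1) (n-1), (1 - lam (j+1))) * a (N+1) ≤ ε / 2 := by
    calc (∏ j ∈ Finset.Icc (N+1) (n-1), (1 - lam (j+1))) * a (N+1)
        ≤ (ε / (2*M)) * M := by
          apply mul_le_mul hPbound haN1M haN1 (le_of_lt (by positivity))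
      _ = ε / 2 := by field_simp
  linarith
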